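/- arXiv:2105.11417 — 2 statements merged into one kernel-verified Lean document; each statement's English description precedes it below -/
import Mathlib

section
/- Let n, p, q be natural numbers, m a positive natural number, and let L ∈ ℂ^{m×m×(2p+1)×(2q+1)} be a complex 2D convolution filter. Let J(L) denote the Jacobian of the convolution with filter L on m-channel n×n inputs (defined explicitly in the context), and let conv_transpose(L) be the filter with [conv_transpose(L)]_{a,b,k,l} = conj(L_{b,a,2p-k,2q-l}). Then J(conv_transpose(L)) = (J(L))^H, the conjugate transpose of J(L). -/
open Matrix

open scoped Kronecker ComplexConjugate

/-- The shift matrix `P^(k)`: the `n × n` matrix with `P^(k)_{i,j} = 1` if `i - j = k`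
(as integers) and `0` otherwise. -/
noncomputable def shiftP (n : ℕ) (k : ℤ) : Matrix (Fin n) (Fin n) ℂ :=
  Matrix.of fun i j => if ((i : ℕ) : ℤ) - ((j : ℕ) : ℤ) = k then 1 else 0

/-- The Jacobian of the 2D convolution (zero padding, stride 1) with a complex filter
`L ∈ ℂ^{m×m×(2p+1)×(2q+1)}` on `m`-channel `n×n` inputs: the block matrix whose `(a,b)` block is
`Σ_{i=-p}^{p} Σ_{j=-q}^{q} L_{a,b,p+i,q+j} • (P^(i) ⊗ P^(j))`. -/
noncomputable def convJacobian (n p q m : ℕ)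
    (L : Fin m → Fin m → Fin (2 * p + 1) → Fin (2 * q + 1) → ℂ) :
    Matrix (Fin m × Fin n × Fin n) (Fin m × Fin n × Fin n) ℂ :=
  Matrix.of fun x y =>
    ∑ k : Fin (2 * p + 1), ∑ l : Fin (2 * q + 1),
      L x.1 y.1 k l *
        (shiftP n (((k : ℕ) : ℤ) - (p : ℤ)) ⊗ₖ shiftP n (((l : ℕ) : ℤ) - (q : ℤ))) x.2 y.2

lemma shiftP_rev (n p : ℕ) (k : Fin (2 * p + 1)) (i j : Fin n) :
    shiftP n (((k.rev : ℕ) : ℤ) - (p : ℤ)) i j = shiftP n (((k : ℕ) : ℤ) - (p : ℤ)) j i := by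
  simp only [shiftP, Matrix.of_apply, Fin.val_rev]
  have hk := k.isLt
  congr 1
  rw [eq_iff_iff]
  constructor <;> intro h <;> omega

/-- For a complex filter `L`, the Jacobian of the convolution with
`conv_transpose(L)_{a,b,k,l} = conj (L_{b,a,2p-k,2q-l})` equals the conjugate transpose of the
Jacobian of the convolution with `L`. -/
theorem convJacobian_conv_transpose (n p q m : ℕ) (hm : 0 < m)
    (L : Fin m → Fin m → Fin (2 * p + 1) → Fin (2 * q + 1) → ℂ) :
    convJacobian n p q m (fun a b k l => conj (L b a k.rev l.rev)) =
      (convJacobian n p q m L)ᴴ := by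
  ext x y
  simp only [convJacobian, conjTranspose_apply, Matrix.of_apply, star_sum]
  refine Fintype.sum_equiv Fin.revPerm _ _ fun k => ?_
  refine Fintype.sum_equiv Fin.revPerm _ _ fun l => ?_
  simp only [Fin.revPerm_apply, Fin.rev_rev]
  obtain ⟨x1, x2, x3⟩ := x
  obtain ⟨y1, y2, y3⟩ := y
  simp only [kroneckerMap_apply, shiftP_rev, star_mul']
  congr 1 <;> simp [shiftP, apply_ite conj]
end

section
/- Let n, p, q be natural numbers, m a positive natural number, and let L ∈ ℂ^{m×m×(2p+1)×(2q+1)} be a complex 2D convolution filter, with Jacobian J(L) on m-channel n×n inputs (defined explicitly in the context). Assume n ≥ 2p+1 and n ≥ 2q+1. Then J(L) is skew-Hermitian (J(L)^H = -J(L)) if and only if there exists a filter M ∈ ℂ^{m×m×(2p+1)×(2q+1)} such that L = M - conv_transpose(M), where [conv_transpose(M)]_{a,b,k,l} = conj(M_{b,a,2p-k,2q-l}). -/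
open Matrix

open scoped Kronecker ComplexConjugate

lemma convJacobian_eval (n p q m : ℕ)
    (N : Fin m → Fin m → Fin (2 * p + 1) → Fin (2 * q + 1) → ℂ)
    (a b : Fin m) (k : Fin (2 * p + 1)) (l : Fin (2 * q + 1))
    (i₁ i₂ j₁ j₂ : Fin n)
    (h1 : ((i₁ : ℕ) : ℤ) - ((j₁ : ℕ) : ℤ) = ((k : ℕ) : ℤ) - (p : ℤ))
    (h2 : ((i₂ : ℕ) : ℤ) - ((j₂ : ℕ) : ℤ) = ((l : ℕ) : ℤ) - (q : ℤ)) :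
    convJacobian n p q m N (a, i₁, i₂) (b, j₁, j₂) = N a b k l := by
  unfold convJacobian shiftP
  simp only [Matrix.of_apply, Matrix.kroneckerMap_apply, h1, h2, sub_left_inj,
    Int.natCast_inj, Fin.val_inj, mul_ite, mul_one, mul_zero, ite_mul, zero_mul]
  simp [Finset.sum_ite_eq]

lemma skew_of_pointwise (n p q m : ℕ)
    (N : Fin m → Fin m → Fin (2 * p + 1) → Fin (2 * q + 1) → ℂ)
    (hN : ∀ a b k l, conj (N b a (Fin.rev k) (Fin.rev l)) = - N a b k l) :
    (convJacobian n p q m N)ᴴ = -(convJacobian n p q m N) := by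
  ext ⟨a, i₁, i₂⟩ ⟨b, j₁, j₂⟩
  simp only [conjTranspose_apply, Matrix.neg_apply, convJacobian, Matrix.of_apply, shiftP,
    Matrix.kroneckerMap_apply, star_sum, ← Finset.sum_neg_distrib]
  refine Fintype.sum_equiv Fin.revPerm _ _ fun k => ?_
  refine Fintype.sum_equiv Fin.revPerm _ _ fun l => ?_
  simp only [Fin.revPerm_apply]
  have e1 : (((j₁ : ℕ) : ℤ) - ((i₁ : ℕ) : ℤ) = ((k : ℕ) : ℤ) - (p : ℤ)) ↔
      (((i₁ : ℕ) : ℤ) - ((j₁ : ℕ) : ℤ) = (((Fin.rev k : Fin (2*p+1)) : ℕ) : ℤ) - (p : ℤ)) := by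
    rw [Fin.val_rev]; have := k.isLt; omega
  have e2 : (((j₂ : ℕ) : ℤ) - ((i₂ : ℕ) : ℤ) = ((l : ℕ) : ℤ) - (q : ℤ)) ↔
      (((i₂ : ℕ) : ℤ) - ((j₂ : ℕ) : ℤ) = (((Fin.rev l : Fin (2*q+1)) : ℕ) : ℤ) - (q : ℤ)) := by
    rw [Fin.val_rev]; have := l.isLt; omega
  rw [if_congr e1 rfl rfl, if_congr e2 rfl rfl]
  have h := hN a b (Fin.rev k) (Fin.rev l)
  rw [Fin.rev_rev, Fin.rev_rev, starRingEnd_apply] at h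
  simp only [star_mul', apply_ite (star : ℂ → ℂ), star_one, star_zero, h]
  ring

/-- If `n ≥ 2p+1` and `n ≥ 2q+1`, the Jacobian of the convolution with a complex filter `L` is
skew-Hermitian if and only if `L = M - conv_transpose(M)` for some filter `M`, where
`conv_transpose(M)_{a,b,k,l} = conj (M_{b,a,2p-k,2q-l})`. -/
theorem convJacobian_skewHermitian_iff (n p q m : ℕ) (hm : 0 < m)
    (hp : 2 * p + 1 ≤ n) (hq : 2 * q + 1 ≤ n)
    (L : Fin m → Fin m → Fin (2 * p + 1) → Fin (2 * q + 1) → ℂ) :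
    (convJacobian n p q m L)ᴴ = -(convJacobian n p q m L) ↔
      ∃ M : Fin m → Fin m → Fin (2 * p + 1) → Fin (2 * q + 1) → ℂ,
        L = fun a b k l => M a b k l - conj (M b a k.rev l.rev) := by
  constructor
  · intro h
    have key : ∀ a b (k : Fin (2*p+1)) (l : Fin (2*q+1)),
        conj (L b a k.rev l.rev) = - L a b k l := by
      intro a b k l
      have hk : (k : ℕ) < n := lt_of_lt_of_le k.isLt hp
      have hl : (l : ℕ) < n := lt_of_lt_of_le l.isLt hq
      have hpn : p < n := by omega
      have hqn : q < n := by omega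
      have h' := congrFun (congrFun h (a, ⟨k, hk⟩, ⟨l, hl⟩)) (b, ⟨p, hpn⟩, ⟨q, hqn⟩)
      rw [conjTranspose_apply, Matrix.neg_apply] at h'
      rw [convJacobian_eval n p q m L b a k.rev l.rev ⟨p, hpn⟩ ⟨q, hqn⟩ ⟨k, hk⟩ ⟨l, hl⟩
        (by simp only [Fin.val_rev, Fin.val_mk]; have := k.isLt; omega)
        (by simp only [Fin.val_rev, Fin.val_mk]; have := l.isLt; omega)] at h'
      rw [convJacobian_eval n p q m L a b k l ⟨k, hk⟩ ⟨l, hl⟩ ⟨p, hpn⟩ ⟨q, hqn⟩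
        (by simp) (by simp)] at h'
      exact h'
    refine ⟨fun a b k l => L a b k l / 2, ?_⟩
    funext a b k l
    have : conj (L b a k.rev l.rev / 2) = - L a b k l / 2 := by
      rw [map_div₀, key, map_ofNat]
    rw [this]; ring
  · rintro ⟨M, rfl⟩
    apply skew_of_pointwise
    intro a b k l
    simp only [Fin.rev_rev, map_sub, Complex.conj_conj]
    ring
end
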